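/- Suppose W_d takes exactly three values A, B, C on GF(2^m)^*. Then 2^{2m} |V| = 2^{2m}(A + B + C) - 2^m(AB + BC + CA) + (2^m - 1)ABC, where V is the set of roots of 1 + x^d + (1 + x)^d in GF(2^m). -/

import Mathlib

open Finset

/-- `(-1)^{Tr(y)}` as an integer, where `Tr` is the absolute trace to `GF(2)`. -/
noncomputable def sgn (F : Type*) [Field F] [Fintype F] [Algebra (ZMod 2) F] (y : F) : ℤ :=
  if Algebra.trace (ZMod 2) F y = 0 then 1 else -1

/-- The Walsh transform `W_d(a) = Σ_{x ∈ GF(2^m)} (-1)^{Tr(x^d + a x)}`. -/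
noncomputable def Wd (F : Type*) [Field F] [Fintype F] [Algebra (ZMod 2) F]
    (d : ℕ) (a : F) : ℤ :=
  ∑ x : F, sgn F (x ^ d + a * x)

set_option linter.unusedSectionVars false

section Aux
variable {F : Type*} [Field F] [Fintype F] [DecidableEq F] [Algebra (ZMod 2) F]

lemma zmod2_cases (a : ZMod 2) : a = 0 ∨ a = 1 := by revert a; decide

lemma sgn_zero : sgn F 0 = 1 := by simp [sgn]

lemma sgn_add (x y : F) : sgn F (x + y) = sgn F x * sgn F y := by
  unfold sgn
  rw [map_add]
  rcases zmod2_cases (Algebra.trace (ZMod 2) F x) with h1 | h1 <;>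
    rcases zmod2_cases (Algebra.trace (ZMod 2) F y) with h2 | h2 <;>
      simp [h1, h2, show (1+1 : ZMod 2) = 0 from rfl]

lemma charF2 : CharP F 2 :=
  charP_of_injective_algebraMap (algebraMap (ZMod 2) F).injective 2

lemma F_add_self (x : F) : x + x = 0 := by
  haveI := charF2 (F := F); exact CharTwo.add_self_eq_zero x

lemma F_add_eq_zero_iff (x y : F) : x + y = 0 ↔ y = x := by
  constructor
  · intro h
    have hy : y = -x := eq_neg_of_add_eq_zero_right h
    haveI := charF2 (F := F)
    rwa [CharTwo.neg_eq] at hy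
  · rintro rfl; exact F_add_self _

lemma exists_trace_one : ∃ z : F, Algebra.trace (ZMod 2) F z ≠ 0 := by
  haveI : Fact (Nat.Prime 2) := ⟨Nat.prime_two⟩
  by_contra hf
  push_neg at hf
  have h := (traceForm_nondegenerate (ZMod 2) F).1 1
  simp_rw [Algebra.traceForm_apply, one_mul] at h
  exact one_ne_zero (h fun b => hf b)

lemma sum_sgn : ∑ y : F, sgn F y = 0 := by
  obtain ⟨z, hz⟩ := exists_trace_one (F := F)
  have hsz : sgn F z = -1 := by simp [sgn, hz]
  have h1 : ∑ y : F, sgn F y = ∑ y : F, sgn F (y + z) :=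
    (Fintype.sum_equiv (Equiv.addRight z) _ _ fun y => rfl).symm
  have h2 : ∑ y : F, sgn F (y + z) = -∑ y : F, sgn F y := by
    simp_rw [sgn_add, hsz, mul_neg_one, Finset.sum_neg_distrib]
  have := h1.trans h2
  linarith

lemma sum_sgn_mul (c : F) : ∑ x : F, sgn F (c * x) = if c = 0 then (Fintype.card F : ℤ) else 0 := by
  rcases eq_or_ne c 0 with rfl | hc
  · simp [sgn_zero, Finset.card_univ]
  · rw [if_neg hc, ← sum_sgn (F := F)]
    exact Fintype.sum_equiv (Equiv.mulLeft₀ c hc) _ _ fun x => rfl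

lemma pow_d_bijective {d : ℕ} (hd1 : 1 ≤ d) (hd : Nat.Coprime d (Fintype.card F - 1)) :
    Function.Bijective (fun x : F => x ^ d) := by
  rw [Fintype.bijective_iff_injective_and_card]
  refine ⟨fun x y hxy => ?_, rfl⟩
  simp only at hxy
  rcases eq_or_ne y 0 with rfl | hy
  · rw [zero_pow (by omega)] at hxy
    exact pow_eq_zero_iff (by omega) |>.mp hxy
  · rcases eq_or_ne x 0 with rfl | hx
    · rw [zero_pow (by omega)] at hxy
      exact ((hy (pow_eq_zero_iff (by omega) |>.mp hxy.symm)).elim)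
    · have hcard : Nat.card Fˣ = Fintype.card F - 1 := by
        rw [Nat.card_eq_fintype_card, Fintype.card_units]
      have hco : (Nat.card Fˣ).Coprime d := by rw [hcard]; exact hd.symm
      have := (powCoprime hco).injective (a₁ := Units.mk0 x hx) (a₂ := Units.mk0 y hy)
      have hu : Units.mk0 x hx ^ d = Units.mk0 y hy ^ d := by
        ext; simpa using hxy
      simpa [Units.ext_iff] using this (by simpa [powCoprime] using hu)

lemma sum_sgn_mul' (c : F) :
    ∑ x : F, sgn F (x * c) = if c = 0 then (Fintype.card F : ℤ) else 0 := by
  simp_rw [mul_comm]; exact sum_sgn_mul c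

variable {d : ℕ}

lemma Wd_zero (hb : Function.Bijective (fun x : F => x ^ d)) : Wd F d 0 = 0 := by
  rw [Wd]
  simp_rw [zero_mul, add_zero]
  rw [← sum_sgn (F := F)]
  exact Fintype.sum_bijective _ hb (fun x => sgn F (x ^ d)) (sgn F) fun x => rfl

lemma sum_Wd (hd1 : 1 ≤ d) : ∑ a : F, Wd F d a = (Fintype.card F : ℤ) := by
  simp_rw [Wd, sgn_add]
  rw [Finset.sum_comm]
  have key : ∀ x : F, ∑ a : F, sgn F (x ^ d) * sgn F (a * x)
      = if x = 0 then sgn F (x ^ d) * (Fintype.card F : ℤ) else 0 := by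
    intro x
    rw [← Finset.mul_sum, sum_sgn_mul']
    split_ifs <;> ring
  rw [Finset.sum_congr rfl fun x _ => key x, Finset.sum_ite_eq' Finset.univ (0 : F)]
  simp [zero_pow (show d ≠ 0 by omega), sgn_zero]

lemma sum_Wd_sq : ∑ a : F, (Wd F d a) ^ 2 = (Fintype.card F : ℤ) ^ 2 := by
  have expand : ∀ a : F, (Wd F d a) ^ 2
      = ∑ x : F, ∑ y : F, sgn F (x ^ d + y ^ d) * sgn F ((x + y) * a) := by
    intro a
    rw [pow_two, Wd, Finset.sum_mul_sum]
    refine Finset.sum_congr rfl fun x _ => Finset.sum_congr rfl fun y _ => ?_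
    rw [← sgn_add, ← sgn_add]
    congr 1
    ring
  calc ∑ a : F, (Wd F d a) ^ 2
      = ∑ a : F, ∑ x : F, ∑ y : F, sgn F (x ^ d + y ^ d) * sgn F ((x + y) * a) :=
        Finset.sum_congr rfl fun a _ => expand a
    _ = ∑ x : F, ∑ y : F, ∑ a : F, sgn F (x ^ d + y ^ d) * sgn F ((x + y) * a) := by
        rw [Finset.sum_comm]
        exact Finset.sum_congr rfl fun x _ => Finset.sum_comm
    _ = ∑ x : F, ∑ y : F, (if y = x then sgn F (x ^ d + y ^ d) * (Fintype.card F : ℤ) else 0) := by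
        refine Finset.sum_congr rfl fun x _ => Finset.sum_congr rfl fun y _ => ?_
        rw [← Finset.mul_sum, sum_sgn_mul]
        simp only [F_add_eq_zero_iff]
        split_ifs <;> ring
    _ = ∑ x : F, sgn F (x ^ d + x ^ d) * (Fintype.card F : ℤ) := by
        refine Finset.sum_congr rfl fun x _ => ?_
        rw [Finset.sum_ite_eq' Finset.univ x]
        simp
    _ = (Fintype.card F : ℤ) ^ 2 := by
        simp_rw [F_add_self, sgn_zero, one_mul, Finset.sum_const, Finset.card_univ,
          nsmul_eq_mul]
        ring

lemma sum_Wd_cube : ∑ a : F, (Wd F d a) ^ 3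
    = (Fintype.card F : ℤ) * ∑ x : F, ∑ y : F, sgn F (x ^ d + y ^ d + (x + y) ^ d) := by
  have expand : ∀ a : F, (Wd F d a) ^ 3
      = ∑ x : F, ∑ y : F, ∑ z : F,
          sgn F (x ^ d + y ^ d + z ^ d) * sgn F ((x + y + z) * a) := by
    intro a
    rw [show (3 : ℕ) = 2 + 1 from rfl, pow_succ, pow_two, Wd, Finset.sum_mul_sum,
      Finset.sum_mul]
    refine Finset.sum_congr rfl fun x _ => ?_
    rw [Finset.sum_mul]
    refine Finset.sum_congr rfl fun y _ => ?_
    rw [Finset.mul_sum]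
    refine Finset.sum_congr rfl fun z _ => ?_
    rw [← sgn_add, ← sgn_add, ← sgn_add]
    congr 1
    ring
  calc ∑ a : F, (Wd F d a) ^ 3
      = ∑ a : F, ∑ x : F, ∑ y : F, ∑ z : F,
          sgn F (x ^ d + y ^ d + z ^ d) * sgn F ((x + y + z) * a) :=
        Finset.sum_congr rfl fun a _ => expand a
    _ = ∑ x : F, ∑ y : F, ∑ z : F, ∑ a : F,
          sgn F (x ^ d + y ^ d + z ^ d) * sgn F ((x + y + z) * a) := by
        rw [Finset.sum_comm]
        refine Finset.sum_congr rfl fun x _ => ?_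
        rw [Finset.sum_comm]
        refine Finset.sum_congr rfl fun y _ => ?_
        rw [Finset.sum_comm]
    _ = ∑ x : F, ∑ y : F, ∑ z : F,
          (if z = x + y then sgn F (x ^ d + y ^ d + z ^ d) * (Fintype.card F : ℤ) else 0) := by
        refine Finset.sum_congr rfl fun x _ => Finset.sum_congr rfl fun y _ =>
          Finset.sum_congr rfl fun z _ => ?_
        rw [← Finset.mul_sum, sum_sgn_mul]
        simp only [F_add_eq_zero_iff]
        split_ifs <;> ring
    _ = ∑ x : F, ∑ y : F, sgn F (x ^ d + y ^ d + (x + y) ^ d) * (Fintype.card F : ℤ) := by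
        refine Finset.sum_congr rfl fun x _ => Finset.sum_congr rfl fun y _ => ?_
        rw [Finset.sum_ite_eq' Finset.univ (x + y)]
        simp
    _ = (Fintype.card F : ℤ) * ∑ x : F, ∑ y : F, sgn F (x ^ d + y ^ d + (x + y) ^ d) := by
        rw [Finset.mul_sum]
        refine Finset.sum_congr rfl fun x _ => ?_
        rw [Finset.mul_sum]
        refine Finset.sum_congr rfl fun y _ => ?_
        ring


lemma Ssum (hd1 : 1 ≤ d) (hb : Function.Bijective (fun x : F => x ^ d)) :
    ∑ x : F, ∑ y : F, sgn F (x ^ d + y ^ d + (x + y) ^ d)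
      = (Fintype.card F : ℤ) *
        ((Finset.univ.filter fun t : F => 1 + t ^ d + (1 + t) ^ d = 0).card : ℤ) := by
  have hzero : ∑ x : F, sgn F (x ^ d + 0 ^ d + (x + 0) ^ d) = (Fintype.card F : ℤ) := by
    have h : ∀ x : F, x ^ d + 0 ^ d + (x + 0) ^ d = 0 := by
      intro x
      rw [zero_pow (show d ≠ 0 by omega), add_zero, add_zero]
      exact F_add_self _
    simp_rw [h, sgn_zero, Finset.sum_const, Finset.card_univ, nsmul_eq_mul, mul_one]
  have inner : ∀ c : F, ∑ y ∈ Finset.univ \ {(0 : F)}, sgn F (y ^ d * c)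
      = (if c = 0 then (Fintype.card F : ℤ) else 0) - 1 := by
    intro c
    have e1 : ∑ y ∈ Finset.univ \ {(0 : F)}, sgn F (y ^ d * c)
        = (∑ y : F, sgn F (y ^ d * c)) - sgn F ((0 : F) ^ d * c) := by
      rw [Finset.sum_sdiff_eq_sub (Finset.singleton_subset_iff.mpr (Finset.mem_univ 0)),
        Finset.sum_singleton]
    have e2 : ∑ y : F, sgn F (y ^ d * c) = ∑ u : F, sgn F (u * c) :=
      Fintype.sum_bijective _ hb (fun y => sgn F (y ^ d * c)) (fun u => sgn F (u * c))
        fun y => rfl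
    rw [e1, e2, sum_sgn_mul', zero_pow (show d ≠ 0 by omega), zero_mul, sgn_zero]
  have step1 : ∀ y : F, y ≠ 0 → ∑ x : F, sgn F (x ^ d + y ^ d + (x + y) ^ d)
      = ∑ t : F, sgn F (y ^ d * (1 + t ^ d + (1 + t) ^ d)) := by
    intro y hy
    have hbij : Function.Bijective (fun t : F => y * t) := by
      constructor
      · exact fun a b h => mul_left_cancel₀ hy h
      · exact fun b => ⟨y⁻¹ * b, by field_simp⟩
    refine (Fintype.sum_bijective (fun t => y * t) hbij
      (fun t => sgn F (y ^ d * (1 + t ^ d + (1 + t) ^ d)))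
      (fun x => sgn F (x ^ d + y ^ d + (x + y) ^ d)) fun t => ?_).symm
    congr 1
    have h1 : y * t + y = y * (1 + t) := by ring
    rw [h1, mul_pow, mul_pow]
    ring
  have hrest : ∑ y ∈ Finset.univ \ {(0 : F)}, ∑ x : F, sgn F (x ^ d + y ^ d + (x + y) ^ d)
      = (Fintype.card F : ℤ) *
          ((Finset.univ.filter fun t : F => 1 + t ^ d + (1 + t) ^ d = 0).card : ℤ)
        - (Fintype.card F : ℤ) := by
    calc ∑ y ∈ Finset.univ \ {(0 : F)}, ∑ x : F, sgn F (x ^ d + y ^ d + (x + y) ^ d)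
        = ∑ y ∈ Finset.univ \ {(0 : F)}, ∑ t : F, sgn F (y ^ d * (1 + t ^ d + (1 + t) ^ d)) := by
          refine Finset.sum_congr rfl fun y hy => step1 y ?_
          simpa using (Finset.mem_sdiff.mp hy).2
      _ = ∑ t : F, ∑ y ∈ Finset.univ \ {(0 : F)}, sgn F (y ^ d * (1 + t ^ d + (1 + t) ^ d)) :=
          Finset.sum_comm
      _ = ∑ t : F, ((if 1 + t ^ d + (1 + t) ^ d = 0 then (Fintype.card F : ℤ) else 0) - 1) :=
          Finset.sum_congr rfl fun t _ => inner _
      _ = (∑ t : F, if 1 + t ^ d + (1 + t) ^ d = 0 then (Fintype.card F : ℤ) else 0)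
            - (Fintype.card F : ℤ) := by
          rw [Finset.sum_sub_distrib, Finset.sum_const, Finset.card_univ, nsmul_eq_mul, mul_one]
      _ = (Fintype.card F : ℤ) *
            ((Finset.univ.filter fun t : F => 1 + t ^ d + (1 + t) ^ d = 0).card : ℤ)
          - (Fintype.card F : ℤ) := by
          rw [← Finset.sum_filter, Finset.sum_const, nsmul_eq_mul, mul_comm]
  rw [Finset.sum_comm, Finset.sum_eq_sum_sdiff_singleton_add (Finset.mem_univ (0 : F)), hrest]
  rw [hzero]
  ring

end Aux

/-- the identity 2^(2m)|V| = 2^(2m)(A+B+C) - 2^m(AB+BC+CA) + (2^m-1)ABC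
when W_d takes exactly the three distinct values A, B, C on GF(2^m)^*. -/
theorem stmt_8 {m : ℕ} (hm : 1 ≤ m) (F : Type*) [Field F] [Fintype F] [DecidableEq F]
    [Algebra (ZMod 2) F] (hF : Fintype.card F = 2 ^ m)
    (d : ℕ) (hd : Nat.Coprime d (2 ^ m - 1))
    (A B C : ℤ) (hAB : A ≠ B) (hAC : A ≠ C) (hBC : B ≠ C)
    (himg : (Finset.univ \ {(0 : F)}).image (Wd F d) = {A, B, C}) :
    2 ^ (2 * m) *
        ((Finset.univ.filter fun x : F => 1 + x ^ d + (1 + x) ^ d = 0).card : ℤ) =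
      2 ^ (2 * m) * (A + B + C) - 2 ^ m * (A * B + B * C + C * A) +
        (2 ^ m - 1) * (A * B * C) := by
  -- notation
  set T : Finset F := Finset.univ \ {(0 : F)} with hT
  have hcardT : (T.card : ℤ) = (Fintype.card F : ℤ) - 1 := by
    rw [hT, Finset.sdiff_singleton_eq_erase, Finset.card_erase_of_mem (Finset.mem_univ 0),
      Finset.card_univ]
    have : 1 ≤ Fintype.card F := Fintype.card_pos
    push_cast [Nat.cast_sub this]
    ring
  -- d ≥ 1
  have hd1 : 1 ≤ d := by
    rcases Nat.eq_zero_or_pos d with rfl | h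
    · exfalso
      have h1 : 2 ^ m - 1 = 1 := by simpa [Nat.coprime_zero_left] using hd
      have h2 : Fintype.card F = 2 := by
        have h3 : (2 : ℕ) ^ m = 2 := by
          have := Nat.one_le_two_pow (n := m)
          omega
        rw [hF, h3]
      have hTc : T.card = 1 := by
        rw [hT, Finset.sdiff_singleton_eq_erase, Finset.card_erase_of_mem (Finset.mem_univ 0),
          Finset.card_univ, h2]
      have h3 : ({A, B, C} : Finset ℤ).card = 3 := by
        rw [Finset.card_insert_of_notMem (by simp [hAB, hAC]),
          Finset.card_insert_of_notMem (by simp [hBC]), Finset.card_singleton]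
      have h4 := Finset.card_image_le (s := T) (f := Wd F 0)
      rw [himg, hTc, h3] at h4
      omega
    · exact h
  -- bijectivity of x ↦ x^d
  have hb : Function.Bijective (fun x : F => x ^ d) := by
    refine pow_d_bijective hd1 ?_
    rwa [hF]
  have hW0 : Wd F d 0 = 0 := Wd_zero hb
  -- power sums over T
  have hS1 : ∑ a ∈ T, Wd F d a = (Fintype.card F : ℤ) := by
    rw [hT, Finset.sum_sdiff_eq_sub (Finset.singleton_subset_iff.mpr (Finset.mem_univ 0)),
      Finset.sum_singleton, hW0, sub_zero, sum_Wd hd1]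
  have hS2 : ∑ a ∈ T, (Wd F d a) ^ 2 = (Fintype.card F : ℤ) ^ 2 := by
    rw [hT, Finset.sum_sdiff_eq_sub (Finset.singleton_subset_iff.mpr (Finset.mem_univ 0)),
      Finset.sum_singleton, hW0, sum_Wd_sq]
    norm_num
  have hS3 : ∑ a ∈ T, (Wd F d a) ^ 3 = (Fintype.card F : ℤ) ^ 2 *
      ((Finset.univ.filter fun x : F => 1 + x ^ d + (1 + x) ^ d = 0).card : ℤ) := by
    rw [hT, Finset.sum_sdiff_eq_sub (Finset.singleton_subset_iff.mpr (Finset.mem_univ 0)),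
      Finset.sum_singleton, hW0, sum_Wd_cube, Ssum hd1 hb]
    norm_num
    ring
  -- each value is a root of (X-A)(X-B)(X-C)
  have hmem : ∀ a ∈ T, (Wd F d a - A) * (Wd F d a - B) * (Wd F d a - C) = 0 := by
    intro a ha
    have : Wd F d a ∈ ({A, B, C} : Finset ℤ) := himg ▸ Finset.mem_image_of_mem _ ha
    simp only [Finset.mem_insert, Finset.mem_singleton] at this
    rcases this with h | h | h <;> rw [h] <;> ring
  have hzero : ∑ a ∈ T, ((Wd F d a) ^ 3 - (A + B + C) * (Wd F d a) ^ 2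
      + (A * B + B * C + C * A) * Wd F d a - A * B * C) = 0 := by
    refine Finset.sum_eq_zero fun a ha => ?_
    linear_combination hmem a ha
  have hsplit : ∑ a ∈ T, ((Wd F d a) ^ 3 - (A + B + C) * (Wd F d a) ^ 2
      + (A * B + B * C + C * A) * Wd F d a - A * B * C)
      = (∑ a ∈ T, (Wd F d a) ^ 3) - (A + B + C) * (∑ a ∈ T, (Wd F d a) ^ 2)
        + (A * B + B * C + C * A) * (∑ a ∈ T, Wd F d a) - A * B * C * (T.card : ℤ) := by
    rw [Finset.sum_sub_distrib, Finset.sum_add_distrib, Finset.sum_sub_distrib,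
      ← Finset.mul_sum, ← Finset.mul_sum, Finset.sum_const, nsmul_eq_mul]
    ring
  rw [hsplit, hS1, hS2, hS3, hcardT] at hzero
  have hq : (Fintype.card F : ℤ) = 2 ^ m := by rw [hF]; push_cast; ring
  have h2m : (2 : ℤ) ^ (2 * m) = (Fintype.card F : ℤ) ^ 2 := by
    rw [hq, ← pow_mul, mul_comm]
  rw [h2m, ← hq]
  linarith
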